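/- Let F ∈ ℂ[x_1,…,x_{n+2}] be a homogeneous polynomial of degree d ≥ 3 with n ≥ 1, and let G be a finite subgroup of Aut(F). Let n_1, n_2 ≥ 1 with n_1 + n_2 = n+2, let V_1 = span(e_1,…,e_{n_1}) and V_2 = span(e_{n_1+1},…,e_{n_1+n_2}) (where e_1,…,e_{n+2} is the standard basis of ℂ^{n+2}), and suppose V_1 and V_2 are stable under every element of G and V_2 is irreducible as a G-module. Let F^{(d-1,1)} denote the sum of all terms of F of the form c·m·x_{n_1+j} with m a monomial of degree d−1 in x_1,…,x_{n_1} and 1 ≤ j ≤ n_2. If F^{(d-1,1)} ≠ 0, then F^{(d-1,1)} = F′_1·x_{n_1+1} + ⋯ + F′_{n_2}·x_{n_1+n_2}, where F′_1,…,F′_{n_2} ∈ ℂ[x_1,…,x_{n_1}] are ℂ-linearly independent homogeneous polynomials of degree d−1. -/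

import Mathlib

open MvPolynomial

/-- The action of a matrix on a multivariate polynomial: `A(F) = F(∑ a₁ᵢxᵢ, …, ∑ aᵣᵢxᵢ)`. -/
noncomputable def matAct {r : ℕ} (A : Matrix (Fin r) (Fin r) ℂ) (F : MvPolynomial (Fin r) ℂ) :
    MvPolynomial (Fin r) ℂ :=
  MvPolynomial.bind₁ (fun i => ∑ j, MvPolynomial.C (A i j) * MvPolynomial.X j) F

lemma matAct_one {r : ℕ} (F : MvPolynomial (Fin r) ℂ) : matAct 1 F = F := by
  have : (fun i : Fin r => ∑ j, MvPolynomial.C ((1 : Matrix (Fin r) (Fin r) ℂ) i j)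
      * MvPolynomial.X j) = MvPolynomial.X := by
    funext i
    simp [Matrix.one_apply, apply_ite (MvPolynomial.C (σ := Fin r) (R := ℂ)), ite_mul]
  rw [matAct, this, MvPolynomial.bind₁_X_left]
  rfl

lemma matAct_mul {r : ℕ} (A B : Matrix (Fin r) (Fin r) ℂ) (F : MvPolynomial (Fin r) ℂ) :
    matAct (A * B) F = matAct B (matAct A F) := by
  unfold matAct
  rw [MvPolynomial.bind₁_bind₁]
  have h : (fun i : Fin r => (bind₁ fun i => ∑ j, C (B i j) * X j) (∑ j, C (A i j) * X j))
      = fun i : Fin r => ∑ j, C ((A * B) i j) * X j := by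
    funext i
    rw [map_sum]
    simp only [map_mul, bind₁_C_right, bind₁_X_right, algebraMap_eq, Matrix.mul_apply,
      Finset.mul_sum, map_sum, Finset.sum_mul, C_mul]
    rw [Finset.sum_comm]
    simp [mul_assoc]
  rw [h]

/-- The automorphism group of a form, as a subgroup of `GL`. -/
noncomputable def formAut {r : ℕ} (F : MvPolynomial (Fin r) ℂ) : Subgroup (GL (Fin r) ℂ) where
  carrier := {A | matAct (A : Matrix (Fin r) (Fin r) ℂ) F = F}
  one_mem' := by simpa using matAct_one F
  mul_mem' := by
    intro A B hA hB
    simp only [Set.mem_setOf_eq] at *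
    rw [Units.val_mul, matAct_mul, hA, hB]
  inv_mem' := by
    intro A hA
    simp only [Set.mem_setOf_eq] at *
    conv_lhs => rw [← hA]
    rw [← matAct_mul, Units.mul_inv, matAct_one]

/-- `F` is a smooth form: the origin is the only common zero of all partial derivatives. -/
def IsSmoothForm {r : ℕ} (F : MvPolynomial (Fin r) ℂ) : Prop :=
  ∀ x : Fin r → ℂ, (∀ i, MvPolynomial.eval x (MvPolynomial.pderiv i F) = 0) → x = 0

/-- Two forms are isomorphic if they are in the same `GL`-orbit. -/
def FormIso {r : ℕ} (F G : MvPolynomial (Fin r) ℂ) : Prop :=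
  ∃ A : GL (Fin r) ℂ, matAct (A : Matrix (Fin r) (Fin r) ℂ) F = G

/-- The Fermat form of degree `d` in `r` variables. -/
noncomputable def fermatForm (r d : ℕ) : MvPolynomial (Fin r) ℂ :=
  ∑ i, MvPolynomial.X i ^ d

/-- The sum of the terms of `F` of bidegree `(e₁, e₂)` with respect to the splitting of
the variables into the first `n₁` ones and the remaining ones. -/
noncomputable def bidegComponent {r : ℕ} (n₁ e₁ e₂ : ℕ) (F : MvPolynomial (Fin r) ℂ) :
    MvPolynomial (Fin r) ℂ :=
  ∑ m ∈ F.support,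
    if (∑ i ∈ Finset.univ.filter (fun i : Fin r => (i : ℕ) < n₁), m i) = e₁
        ∧ (∑ i ∈ Finset.univ.filter (fun i : Fin r => n₁ ≤ (i : ℕ)), m i) = e₂
      then MvPolynomial.monomial m (MvPolynomial.coeff m F) else 0

section AuxLemmas

open Finset

/-- The bidegree weight: `(1,0)` for the first `n₁` variables, `(0,1)` for the rest. -/
noncomputable def wtAux (n₁ N : ℕ) : Fin N → ℕ × ℕ :=
  fun i => if (i : ℕ) < n₁ then (1, 0) else (0, 1)

lemma weight_wtAux {N : ℕ} (n₁ : ℕ) (m : Fin N →₀ ℕ) :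
    (Finsupp.weight (wtAux n₁ N)) m =
      (∑ i ∈ Finset.univ.filter (fun i : Fin N => (i : ℕ) < n₁), m i,
       ∑ i ∈ Finset.univ.filter (fun i : Fin N => n₁ ≤ (i : ℕ)), m i) := by
  classical
  rw [Finsupp.weight_apply, Finsupp.sum_fintype _ _ (fun _ => by simp)]
  rw [Finset.sum_filter, Finset.sum_filter, prod_mk_sum]
  apply Finset.sum_congr rfl
  intro i _
  by_cases h : (i : ℕ) < n₁
  · simp only [wtAux, if_pos h, smul_eq_mul, Prod.smul_mk, mul_one, mul_zero]
    rw [if_neg (by omega)]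
  · simp only [wtAux, if_neg h, smul_eq_mul, Prod.smul_mk, mul_one, mul_zero]
    rw [if_pos (by omega)]

lemma bidegComponent_eq_whc {N : ℕ} (n₁ e₁ e₂ : ℕ) (F : MvPolynomial (Fin N) ℂ) :
    bidegComponent n₁ e₁ e₂ F
      = MvPolynomial.weightedHomogeneousComponent (wtAux n₁ N) (e₁, e₂) F := by
  classical
  rw [MvPolynomial.weightedHomogeneousComponent_apply, bidegComponent, Finset.sum_filter]
  apply Finset.sum_congr rfl
  intro m _
  congr 1
  rw [weight_wtAux, Prod.mk.injEq]

lemma MvPolynomial.IsWeightedHomogeneous.powAux {σ M : Type*} [AddCommMonoid M] {w : σ → M}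
    {φ : MvPolynomial σ ℂ} {m : M} (h : φ.IsWeightedHomogeneous w m) (k : ℕ) :
    (φ ^ k).IsWeightedHomogeneous w (k • m) := by
  induction k with
  | zero => simpa using MvPolynomial.isWeightedHomogeneous_one ℂ w
  | succ k ih =>
      rw [pow_succ, succ_nsmul]
      exact ih.mul h

lemma bind₁_isWeightedHomogeneous {σ M : Type*} [Fintype σ] [AddCommMonoid M] {w : σ → M}
    (f : σ → MvPolynomial σ ℂ) (hf : ∀ i, (f i).IsWeightedHomogeneous w (w i))
    {F : MvPolynomial σ ℂ} {e : M} (hF : F.IsWeightedHomogeneous w e) :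
    (MvPolynomial.bind₁ f F).IsWeightedHomogeneous w e := by
  classical
  conv_lhs => rw [F.as_sum]
  rw [map_sum]
  apply MvPolynomial.IsWeightedHomogeneous.sum
  intro m hm
  rw [MvPolynomial.bind₁_monomial]
  have h1 : (MvPolynomial.C (MvPolynomial.coeff m F) : MvPolynomial σ ℂ).IsWeightedHomogeneous w 0 :=
    MvPolynomial.isWeightedHomogeneous_C w _
  have h2 : (∏ i ∈ m.support, f i ^ m i).IsWeightedHomogeneous w (∑ i ∈ m.support, m i • w i) :=
    MvPolynomial.IsWeightedHomogeneous.prod _ _ _ (fun i _ => (hf i).powAux (m i))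
  have h3 : (∑ i ∈ m.support, m i • w i) = e := by
    have := hF (MvPolynomial.mem_support_iff.mp hm)
    rwa [Finsupp.weight_apply] at this
  rw [← h3]
  simpa using h1.mul h2

/-- If `A` respects the weights, then each substitution polynomial is weighted homogeneous. -/
lemma matAct_isWeightedHomogeneous {N : ℕ} {M : Type*} [AddCommMonoid M] [DecidableEq M]
    {w : Fin N → M} {A : Matrix (Fin N) (Fin N) ℂ}
    (hA : ∀ i j, w i ≠ w j → A i j = 0)
    {F : MvPolynomial (Fin N) ℂ} {e : M} (hF : F.IsWeightedHomogeneous w e) :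
    (matAct A F).IsWeightedHomogeneous w e := by
  apply bind₁_isWeightedHomogeneous _ _ hF
  intro i
  apply MvPolynomial.IsWeightedHomogeneous.sum
  intro j _
  by_cases h : w i = w j
  · have := (MvPolynomial.isWeightedHomogeneous_C w (A i j)).mul
      (MvPolynomial.isWeightedHomogeneous_X ℂ w j)
    rwa [zero_add, ← h] at this
  · rw [hA i j h]
    simpa using MvPolynomial.isWeightedHomogeneous_zero ℂ w _

lemma decompAux {N : ℕ} {M : Type*} [AddCommMonoid M] [DecidableEq M] (w : Fin N → M)
    (φ : MvPolynomial (Fin N) ℂ) :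
    φ = ∑ e ∈ φ.support.image (fun m => Finsupp.weight w m),
      MvPolynomial.weightedHomogeneousComponent w e φ := by
  classical
  ext m
  rw [MvPolynomial.coeff_sum]
  simp only [MvPolynomial.coeff_weightedHomogeneousComponent]
  rw [Finset.sum_ite_eq _ (Finsupp.weight w m) (fun _ => MvPolynomial.coeff m φ)]
  by_cases h : m ∈ φ.support
  · rw [if_pos (Finset.mem_image_of_mem _ h)]
  · rw [MvPolynomial.notMem_support_iff.mp h]
    simp

lemma matAct_whc_comm {N : ℕ} {M : Type*} [AddCommMonoid M] [DecidableEq M]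
    {w : Fin N → M} {A : Matrix (Fin N) (Fin N) ℂ}
    (hA : ∀ i j, w i ≠ w j → A i j = 0)
    (φ : MvPolynomial (Fin N) ℂ) (e : M) :
    MvPolynomial.weightedHomogeneousComponent w e (matAct A φ)
      = matAct A (MvPolynomial.weightedHomogeneousComponent w e φ) := by
  classical
  set S := φ.support.image (fun m => Finsupp.weight w m) with hS
  have hmas : ∀ (s : Finset M) (g : M → MvPolynomial (Fin N) ℂ),
      matAct A (∑ x ∈ s, g x) = ∑ x ∈ s, matAct A (g x) := fun s g =>
    map_sum (MvPolynomial.bind₁ fun i => ∑ j, MvPolynomial.C (A i j) * MvPolynomial.X j) g s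
  have key : ∀ e' ∈ S,
      MvPolynomial.weightedHomogeneousComponent w e
          (matAct A (MvPolynomial.weightedHomogeneousComponent w e' φ))
        = if e = e' then matAct A (MvPolynomial.weightedHomogeneousComponent w e' φ) else 0 := by
    intro e' _
    have hw : (matAct A (MvPolynomial.weightedHomogeneousComponent w e' φ)).IsWeightedHomogeneous
        w e' := matAct_isWeightedHomogeneous hA
      (MvPolynomial.weightedHomogeneousComponent_isWeightedHomogeneous e' φ)
    by_cases h : e = e'
    · subst h
      rw [if_pos rfl, hw.weightedHomogeneousComponent_same]
    · rw [if_neg h, hw.weightedHomogeneousComponent_ne e h]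
  calc MvPolynomial.weightedHomogeneousComponent w e (matAct A φ)
      = MvPolynomial.weightedHomogeneousComponent w e
          (∑ e' ∈ S, matAct A (MvPolynomial.weightedHomogeneousComponent w e' φ)) := by
        conv_lhs => rw [decompAux w φ, hmas]
    _ = ∑ e' ∈ S, MvPolynomial.weightedHomogeneousComponent w e
          (matAct A (MvPolynomial.weightedHomogeneousComponent w e' φ)) := map_sum _ _ _
    _ = ∑ e' ∈ S, if e = e'
          then matAct A (MvPolynomial.weightedHomogeneousComponent w e' φ) else 0 :=
        Finset.sum_congr rfl key
    _ = if e ∈ S then matAct A (MvPolynomial.weightedHomogeneousComponent w e φ) else 0 :=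
        Finset.sum_ite_eq _ _ _
    _ = matAct A (MvPolynomial.weightedHomogeneousComponent w e φ) := by
        by_cases h : e ∈ S
        · rw [if_pos h]
        · rw [if_neg h]
          have hz : MvPolynomial.weightedHomogeneousComponent w e φ = 0 := by
            apply MvPolynomial.weightedHomogeneousComponent_eq_zero'
            intro m hm hwm
            exact h (hwm ▸ Finset.mem_image_of_mem _ hm)
          rw [hz]
          exact (map_zero
            (MvPolynomial.bind₁ fun i => ∑ j, MvPolynomial.C (A i j) * MvPolynomial.X j)).symm

end AuxLemmas
/-- the `(d-1,1)`-component of an invariant form, when nonzero, is a sum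
`F′₁x_{n₁+1} + ⋯ + F′_{n₂}x_{n₁+n₂}` with linearly independent `F′_j` of degree `d-1`. -/
theorem component_linear_independent
    (n d : ℕ) (hn : 1 ≤ n) (hd : 3 ≤ d)
    (F : MvPolynomial (Fin (n + 2)) ℂ) (hhom : F.IsHomogeneous d)
    (G : Subgroup (GL (Fin (n + 2)) ℂ)) (hGfin : Finite G) (hG : G ≤ formAut F)
    (n₁ n₂ : ℕ) (hn₁ : 1 ≤ n₁) (hn₂ : 1 ≤ n₂) (hsum : n₁ + n₂ = n + 2)
    (V₁ V₂ : Submodule ℂ (Fin (n + 2) → ℂ))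
    (hV₁ : V₁ = Submodule.span ℂ
      ((fun i : Fin (n + 2) => Pi.single i (1 : ℂ)) '' {i | (i : ℕ) < n₁}))
    (hV₂ : V₂ = Submodule.span ℂ
      ((fun i : Fin (n + 2) => Pi.single i (1 : ℂ)) '' {i | n₁ ≤ (i : ℕ)}))
    (hstab₁ : ∀ A ∈ G, ∀ v ∈ V₁, Matrix.mulVec (A : Matrix (Fin (n + 2)) (Fin (n + 2)) ℂ) v ∈ V₁)
    (hstab₂ : ∀ A ∈ G, ∀ v ∈ V₂, Matrix.mulVec (A : Matrix (Fin (n + 2)) (Fin (n + 2)) ℂ) v ∈ V₂)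
    (hirr₂ : ∀ W : Submodule ℂ (Fin (n + 2) → ℂ), W ≤ V₂ →
      (∀ A ∈ G, ∀ v ∈ W, Matrix.mulVec (A : Matrix (Fin (n + 2)) (Fin (n + 2)) ℂ) v ∈ W) →
      W = ⊥ ∨ W = V₂)
    (hne : bidegComponent n₁ (d - 1) 1 F ≠ 0) :
    ∃ F' : Fin n₂ → MvPolynomial (Fin (n + 2)) ℂ,
      (∀ j, (F' j).IsHomogeneous (d - 1)) ∧
      (∀ j, ∀ m ∈ (F' j).support, ∀ i : Fin (n + 2), m i ≠ 0 → (i : ℕ) < n₁) ∧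
      LinearIndependent ℂ F' ∧
      bidegComponent n₁ (d - 1) 1 F
        = ∑ j : Fin n₂, F' j * MvPolynomial.X (Fin.cast hsum (Fin.natAdd n₁ j)) := by
    classical
  set w : Fin (n + 2) → ℕ × ℕ := wtAux n₁ (n + 2) with hw
  set ι : Fin n₂ → Fin (n + 2) := fun j => Fin.cast hsum (Fin.natAdd n₁ j) with hι
  have hιval : ∀ j, ((ι j : ℕ)) = n₁ + (j : ℕ) := fun j => rfl
  have hιge : ∀ j, n₁ ≤ ((ι j : ℕ)) := fun j => by rw [hιval]; omega
  have hιinj : Function.Injective ι := by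
    intro a b hab
    have : ((ι a : ℕ)) = ((ι b : ℕ)) := by rw [hab]
    rw [hιval, hιval] at this
    exact Fin.ext (by omega)
  -- splitting sums over `Fin (n + 2)`
  have hsplit : ∀ (β : Type) (_ : AddCommMonoid β) (g : Fin (n + 2) → β),
      ∑ i, g i = (∑ i : Fin n₁, g (Fin.cast hsum (Fin.castAdd n₂ i))) + ∑ j : Fin n₂, g (ι j) := by
    intro β _ g
    rw [← Equiv.sum_comp (finSumFinEquiv.trans (finCongr hsum)) g, Fintype.sum_sum_type]
    rfl
  -- membership facts
  have hV₂mem : ∀ v ∈ V₂, ∀ i : Fin (n + 2), (i : ℕ) < n₁ → v i = 0 := by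
    intro v hv i hi
    have hle : V₂ ≤ LinearMap.ker (LinearMap.proj (R := ℂ) (φ := fun _ : Fin (n + 2) => ℂ) i) := by
      rw [hV₂, Submodule.span_le]
      rintro _ ⟨i', hi', rfl⟩
      simp only [SetLike.mem_coe, LinearMap.mem_ker, LinearMap.proj_apply]
      rw [Pi.single_apply, if_neg]
      intro hii
      have h2 : n₁ ≤ (i' : ℕ) := hi'
      have h3 : (i : ℕ) = (i' : ℕ) := congrArg Fin.val hii
      omega
    exact hle hv
  have hV₁mem : ∀ v ∈ V₁, ∀ i : Fin (n + 2), n₁ ≤ (i : ℕ) → v i = 0 := by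
    intro v hv i hi
    have hle : V₁ ≤ LinearMap.ker (LinearMap.proj (R := ℂ) (φ := fun _ : Fin (n + 2) => ℂ) i) := by
      rw [hV₁, Submodule.span_le]
      rintro _ ⟨i', hi', rfl⟩
      simp only [SetLike.mem_coe, LinearMap.mem_ker, LinearMap.proj_apply]
      rw [Pi.single_apply, if_neg]
      intro hii
      have h2 : (i' : ℕ) < n₁ := hi'
      have h3 : (i : ℕ) = (i' : ℕ) := congrArg Fin.val hii
      omega
    exact hle hv
  have hsingle₁ : ∀ i : Fin (n + 2), (i : ℕ) < n₁ → Pi.single i (1 : ℂ) ∈ V₁ := by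
    intro i hi
    rw [hV₁]
    exact Submodule.subset_span ⟨i, hi, rfl⟩
  have hsingle₂ : ∀ i : Fin (n + 2), n₁ ≤ (i : ℕ) → Pi.single i (1 : ℂ) ∈ V₂ := by
    intro i hi
    rw [hV₂]
    exact Submodule.subset_span ⟨i, hi, rfl⟩
  -- block structure of matrices in G
  have hblk : ∀ A ∈ G, ∀ k i : Fin (n + 2), w k ≠ w i →
      (A : Matrix (Fin (n + 2)) (Fin (n + 2)) ℂ) k i = 0 := by
    intro A hA k i hwki
    by_cases hk : (k : ℕ) < n₁ <;> by_cases hi : (i : ℕ) < n₁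
    · exact absurd (by simp [hw, wtAux, hk, hi]) hwki
    · -- i in second block, k in first block: use V₂-stability
      have hcol := hstab₂ A hA _ (hsingle₂ i (by omega))
      have := hV₂mem _ hcol k hk
      rw [Matrix.mulVec_single] at this
      simpa using this
    · have hcol := hstab₁ A hA _ (hsingle₁ i hi)
      have := hV₁mem _ hcol k (by omega)
      rw [Matrix.mulVec_single] at this
      simpa using this
    · exact absurd (by simp [hw, wtAux, hk, hi]) hwki
  -- the component H
  set H := MvPolynomial.weightedHomogeneousComponent w (d - 1, 1) F with hHdef
  have hHbid : bidegComponent n₁ (d - 1) 1 F = H := bidegComponent_eq_whc n₁ (d - 1) 1 F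
  have hne' : H ≠ 0 := hHbid ▸ hne
  have hHw : H.IsWeightedHomogeneous w (d - 1, 1) :=
    MvPolynomial.weightedHomogeneousComponent_isWeightedHomogeneous _ F
  have hHinv : ∀ A ∈ G, matAct (A : Matrix (Fin (n + 2)) (Fin (n + 2)) ℂ) H = H := by
    intro A hA
    have hFA : matAct (A : Matrix (Fin (n + 2)) (Fin (n + 2)) ℂ) F = F := hG hA
    rw [hHdef, ← matAct_whc_comm (hblk A hA), hFA]
  -- linearity of matAct
  have hmas : ∀ (B : Matrix (Fin (n + 2)) (Fin (n + 2)) ℂ) (κ : Type) (s : Finset κ)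
      (g : κ → MvPolynomial (Fin (n + 2)) ℂ),
      matAct B (∑ x ∈ s, g x) = ∑ x ∈ s, matAct B (g x) := fun B κ s g =>
    map_sum (MvPolynomial.bind₁ fun i => ∑ j, MvPolynomial.C (B i j) * MvPolynomial.X j) g s
  have hmac : ∀ (B : Matrix (Fin (n + 2)) (Fin (n + 2)) ℂ) (c : ℂ) (p : MvPolynomial (Fin (n + 2)) ℂ),
      matAct B (c • p) = c • matAct B p := fun B c p =>
    map_smul (MvPolynomial.bind₁ fun i => ∑ j, MvPolynomial.C (B i j) * MvPolynomial.X j) c p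
  have hmam : ∀ (B : Matrix (Fin (n + 2)) (Fin (n + 2)) ℂ) (p q : MvPolynomial (Fin (n + 2)) ℂ),
      matAct B (p * q) = matAct B p * matAct B q := fun B p q =>
    map_mul (MvPolynomial.bind₁ fun i => ∑ j, MvPolynomial.C (B i j) * MvPolynomial.X j) p q
  have hmaiv : ∀ A ∈ G, ∀ p : MvPolynomial (Fin (n + 2)) ℂ,
      matAct ((A : GL (Fin (n + 2)) ℂ) : Matrix (Fin (n + 2)) (Fin (n + 2)) ℂ)
        (matAct ((A⁻¹ : GL (Fin (n + 2)) ℂ) : Matrix (Fin (n + 2)) (Fin (n + 2)) ℂ) p) = p := by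
    intro A _ p
    rw [← matAct_mul]
    have h1 : ((A⁻¹ : GL (Fin (n + 2)) ℂ) : Matrix (Fin (n + 2)) (Fin (n + 2)) ℂ)
        * (A : Matrix (Fin (n + 2)) (Fin (n + 2)) ℂ) = 1 := by
      rw [← Units.val_mul, inv_mul_cancel, Units.val_one]
    rw [h1, matAct_one]
  -- the candidate polynomials
  set F' : Fin n₂ → MvPolynomial (Fin (n + 2)) ℂ := fun j =>
    ∑ m ∈ H.support, if m (ι j) = 1
      then MvPolynomial.monomial (m - Finsupp.single (ι j) 1) (MvPolynomial.coeff m H) else 0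
    with hF'def
  -- weighted homogeneity of extracted pieces
  have hwsingle : ∀ j, Finsupp.weight w (Finsupp.single (ι j) 1) = ((0 : ℕ), (1 : ℕ)) := by
    intro j
    rw [Finsupp.weight_apply, Finsupp.sum_single_index (by simp), one_smul]
    show (if ((ι j : ℕ)) < n₁ then ((1, 0) : ℕ × ℕ) else (0, 1)) = (0, 1)
    rw [if_neg (by have := hιge j; omega)]
  have hF'w : ∀ j, (F' j).IsWeightedHomogeneous w (d - 1, 0) := by
    intro j
    rw [hF'def]
    apply MvPolynomial.IsWeightedHomogeneous.sum
    intro m hm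
    split_ifs with hc
    · apply MvPolynomial.isWeightedHomogeneous_monomial
      have h1 : Finsupp.weight w m = (d - 1, 1) := hHw (MvPolynomial.mem_support_iff.mp hm)
      have hle : Finsupp.single (ι j) 1 ≤ m := Finsupp.single_le_iff.mpr (by omega)
      have h2 : m - Finsupp.single (ι j) 1 + Finsupp.single (ι j) 1 = m :=
        tsub_add_cancel_of_le hle
      have h3 : Finsupp.weight w (m - Finsupp.single (ι j) 1) + ((0 : ℕ), (1 : ℕ))
          = ((d - 1 : ℕ), (1 : ℕ)) := by
        rw [← hwsingle j, ← map_add, h2, h1]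
      have h4 := congrArg Prod.fst h3
      have h5 := congrArg Prod.snd h3
      simp only [Prod.fst_add, Prod.snd_add] at h4 h5
      exact Prod.ext (by omega) (by omega)
    · exact MvPolynomial.isWeightedHomogeneous_zero ℂ w _
  -- support condition from weighted homogeneity
  have hwsupp : ∀ P : MvPolynomial (Fin (n + 2)) ℂ, P.IsWeightedHomogeneous w (d - 1, 0) →
      ∀ m : Fin (n + 2) →₀ ℕ, MvPolynomial.coeff m P ≠ 0 → ∀ i : Fin (n + 2), n₁ ≤ (i : ℕ) → m i = 0 := by
    intro P hP m hc i hi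
    have h1 := hP hc
    rw [hw, weight_wtAux] at h1
    have h2 := congrArg Prod.snd h1
    simp only at h2
    exact Finset.sum_eq_zero_iff.mp h2 i (Finset.mem_filter.mpr ⟨Finset.mem_univ _, hi⟩)
  -- decomposition of H
  have hdecomp : H = ∑ j : Fin n₂, F' j * MvPolynomial.X (ι j) := by
    have key : ∀ m ∈ H.support, (∑ j : Fin n₂, if m (ι j) = 1
        then MvPolynomial.monomial m (MvPolynomial.coeff m H) else 0)
        = MvPolynomial.monomial m (MvPolynomial.coeff m H) := by
      intro m hm
      have h1 : Finsupp.weight w m = (d - 1, 1) := hHw (MvPolynomial.mem_support_iff.mp hm)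
      rw [hw, weight_wtAux] at h1
      have h2 := congrArg Prod.snd h1
      simp only at h2
      obtain ⟨i₀, hi₀mem, hi₀⟩ : ∃ i₀ ∈ Finset.univ.filter
          (fun i : Fin (n + 2) => n₁ ≤ (i : ℕ)), m i₀ ≠ 0 := by
        by_contra hcon
        push_neg at hcon
        rw [Finset.sum_eq_zero hcon] at h2
        exact one_ne_zero h2.symm
      have hmem := Finset.mem_filter.mp hi₀mem
      have hsum' := Finset.add_sum_erase _ m hi₀mem
      rw [h2] at hsum'
      have hmi₀ : m i₀ = 1 := by omega
      have hz : ∑ i ∈ (Finset.univ.filter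
          (fun i : Fin (n + 2) => n₁ ≤ (i : ℕ))).erase i₀, m i = 0 := by omega
      have hrest := Finset.sum_eq_zero_iff.mp hz
      have hi₀lt : (i₀ : ℕ) < n₁ + n₂ := by rw [hsum]; exact i₀.isLt
      set j₀ : Fin n₂ := ⟨(i₀ : ℕ) - n₁, by have := hmem.2; omega⟩ with hj₀
      have hιj₀ : ι j₀ = i₀ := by
        apply Fin.ext
        rw [hιval]
        have := hmem.2
        simp only [hj₀]
        omega
      have hiff : ∀ j, (m (ι j) = 1) ↔ j = j₀ := by
        intro j
        constructor
        · intro hj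
          by_contra hne
          have hne' : ι j ≠ i₀ := by
            rw [← hιj₀]
            exact fun hc => hne (hιinj hc)
          have : m (ι j) = 0 := hrest _ (Finset.mem_erase.mpr
            ⟨hne', Finset.mem_filter.mpr ⟨Finset.mem_univ _, hιge j⟩⟩)
          omega
        · rintro rfl
          rw [hιj₀]
          exact hmi₀
      rw [Finset.sum_congr rfl (fun j _ => if_congr (hiff j) rfl rfl),
        Finset.sum_ite_eq' Finset.univ j₀, if_pos (Finset.mem_univ _)]
    have expand : ∀ j : Fin n₂, F' j * MvPolynomial.X (ι j)
        = ∑ m ∈ H.support, (if m (ι j) = 1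
            then MvPolynomial.monomial m (MvPolynomial.coeff m H) else 0) := by
      intro j
      rw [hF'def, Finset.sum_mul]
      apply Finset.sum_congr rfl
      intro m hm
      rw [ite_mul, zero_mul]
      split_ifs with hc
      · rw [MvPolynomial.X, MvPolynomial.monomial_mul, mul_one,
          tsub_add_cancel_of_le (Finsupp.single_le_iff.mpr (by omega))]
      · rfl
    calc H = ∑ m ∈ H.support, MvPolynomial.monomial m (MvPolynomial.coeff m H) := H.as_sum
      _ = ∑ m ∈ H.support, ∑ j : Fin n₂, (if m (ι j) = 1
            then MvPolynomial.monomial m (MvPolynomial.coeff m H) else 0) :=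
          Finset.sum_congr rfl fun m hm => (key m hm).symm
      _ = ∑ j : Fin n₂, ∑ m ∈ H.support, (if m (ι j) = 1
            then MvPolynomial.monomial m (MvPolynomial.coeff m H) else 0) := Finset.sum_comm
      _ = ∑ j : Fin n₂, F' j * MvPolynomial.X (ι j) :=
          Finset.sum_congr rfl fun j _ => (expand j).symm
  -- uniqueness of such decompositions
  have huniq2 : ∀ Q R : Fin n₂ → MvPolynomial (Fin (n + 2)) ℂ,
      (∀ j m, MvPolynomial.coeff m (Q j) ≠ 0 → ∀ i : Fin (n + 2), n₁ ≤ (i : ℕ) → m i = 0) →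
      (∀ j m, MvPolynomial.coeff m (R j) ≠ 0 → ∀ i : Fin (n + 2), n₁ ≤ (i : ℕ) → m i = 0) →
      (∑ j : Fin n₂, Q j * MvPolynomial.X (ι j)) = (∑ j : Fin n₂, R j * MvPolynomial.X (ι j)) →
      Q = R := by
    intro Q R hQ hR h
    funext k
    ext m
    by_cases hm2 : ∀ i : Fin (n + 2), n₁ ≤ (i : ℕ) → m i = 0
    · have hco : ∀ P : Fin n₂ → MvPolynomial (Fin (n + 2)) ℂ,
          (∀ j m', MvPolynomial.coeff m' (P j) ≠ 0 → ∀ i : Fin (n + 2), n₁ ≤ (i : ℕ) → m' i = 0) →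
          MvPolynomial.coeff (m + Finsupp.single (ι k) 1)
              (∑ j : Fin n₂, P j * MvPolynomial.X (ι j))
            = MvPolynomial.coeff m (P k) := by
        intro P hP
        rw [MvPolynomial.coeff_sum]
        have hterm : ∀ j : Fin n₂,
            MvPolynomial.coeff (m + Finsupp.single (ι k) 1) (P j * MvPolynomial.X (ι j))
              = if j = k then MvPolynomial.coeff m (P k) else 0 := by
          intro j
          rw [MvPolynomial.coeff_mul_X']
          by_cases hjk : j = k
          · subst hjk
            rw [if_pos, if_pos rfl]
            · rw [add_tsub_cancel_right]
            · rw [Finsupp.mem_support_iff, Finsupp.add_apply, Finsupp.single_apply,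
                if_pos rfl]
              omega
          · rw [if_neg, if_neg hjk]
            rw [Finsupp.mem_support_iff, Finsupp.add_apply, Finsupp.single_apply,
              if_neg (fun hc => hjk (hιinj hc.symm)), hm2 (ι j) (hιge j)]
            omega
        rw [Finset.sum_congr rfl (fun j _ => hterm j), Finset.sum_ite_eq' Finset.univ k,
          if_pos (Finset.mem_univ _)]
      have h2 := congrArg (MvPolynomial.coeff (m + Finsupp.single (ι k) 1)) h
      rwa [hco Q hQ, hco R hR] at h2
    · push_neg at hm2
      obtain ⟨i, hi, hmi⟩ := hm2
      have h1 : MvPolynomial.coeff m (Q k) = 0 := by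
        by_contra hc
        exact hmi (hQ k m hc i hi)
      have h2 : MvPolynomial.coeff m (R k) = 0 := by
        by_contra hc
        exact hmi (hR k m hc i hi)
      rw [h1, h2]
  -- the invariance relation
  have hrel : ∀ A ∈ G, ∀ j, F' j = ∑ k : Fin n₂,
      ((A : Matrix (Fin (n + 2)) (Fin (n + 2)) ℂ) (ι k) (ι j)) •
        matAct (A : Matrix (Fin (n + 2)) (Fin (n + 2)) ℂ) (F' k) := by
    intro A hA j
    have hwne : ∀ a b : Fin (n + 2), n₁ ≤ (a : ℕ) → (b : ℕ) < n₁ → w a ≠ w b := by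
      intro a b ha hb
      show (if (a : ℕ) < n₁ then ((1, 0) : ℕ × ℕ) else (0, 1))
        ≠ (if (b : ℕ) < n₁ then ((1, 0) : ℕ × ℕ) else (0, 1))
      rw [if_neg (by omega), if_pos hb]
      simp
    have hXact : ∀ k : Fin n₂,
        matAct (A : Matrix (Fin (n + 2)) (Fin (n + 2)) ℂ) (MvPolynomial.X (ι k))
          = ∑ j' : Fin n₂, MvPolynomial.C
              ((A : Matrix (Fin (n + 2)) (Fin (n + 2)) ℂ) (ι k) (ι j'))
              * MvPolynomial.X (ι j') := by
      intro k
      have hX1 : matAct (A : Matrix (Fin (n + 2)) (Fin (n + 2)) ℂ) (MvPolynomial.X (ι k))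
          = ∑ i, MvPolynomial.C ((A : Matrix (Fin (n + 2)) (Fin (n + 2)) ℂ) (ι k) i)
              * MvPolynomial.X i :=
        MvPolynomial.bind₁_X_right _ _
      rw [hX1, hsplit _ _ (fun i => MvPolynomial.C
        ((A : Matrix (Fin (n + 2)) (Fin (n + 2)) ℂ) (ι k) i) * MvPolynomial.X i),
        Finset.sum_eq_zero, zero_add]
      intro i' _
      rw [hblk A hA _ _ (hwne (ι k) (Fin.cast hsum (Fin.castAdd n₂ i')) (hιge k) i'.isLt),
        map_zero, zero_mul]
    have h1 : matAct (A : Matrix (Fin (n + 2)) (Fin (n + 2)) ℂ) H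
        = ∑ j' : Fin n₂, (∑ k : Fin n₂,
            ((A : Matrix (Fin (n + 2)) (Fin (n + 2)) ℂ) (ι k) (ι j')) •
              matAct (A : Matrix (Fin (n + 2)) (Fin (n + 2)) ℂ) (F' k))
          * MvPolynomial.X (ι j') := by
      conv_lhs => rw [hdecomp]
      rw [hmas]
      rw [Finset.sum_congr rfl (fun k _ => by rw [hmam, hXact k, Finset.mul_sum])]
      rw [Finset.sum_comm]
      refine Finset.sum_congr rfl fun j' _ => ?_
      rw [Finset.sum_mul]
      refine Finset.sum_congr rfl fun k _ => ?_
      rw [MvPolynomial.smul_eq_C_mul]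
      ring
    have heq : (∑ j' : Fin n₂, F' j' * MvPolynomial.X (ι j'))
        = ∑ j' : Fin n₂, (∑ k : Fin n₂,
            ((A : Matrix (Fin (n + 2)) (Fin (n + 2)) ℂ) (ι k) (ι j')) •
              matAct (A : Matrix (Fin (n + 2)) (Fin (n + 2)) ℂ) (F' k))
          * MvPolynomial.X (ι j') := by
      rw [← hdecomp, ← h1, hHinv A hA]
    have hQs : ∀ j' m, MvPolynomial.coeff m (F' j') ≠ 0 →
        ∀ i : Fin (n + 2), n₁ ≤ (i : ℕ) → m i = 0 :=
      fun j' m hc => hwsupp _ (hF'w j') m hc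
    have hRs : ∀ j' m, MvPolynomial.coeff m (∑ k : Fin n₂,
        ((A : Matrix (Fin (n + 2)) (Fin (n + 2)) ℂ) (ι k) (ι j')) •
          matAct (A : Matrix (Fin (n + 2)) (Fin (n + 2)) ℂ) (F' k)) ≠ 0 →
        ∀ i : Fin (n + 2), n₁ ≤ (i : ℕ) → m i = 0 := by
      intro j' m hc
      refine hwsupp _ ?_ m hc
      apply MvPolynomial.IsWeightedHomogeneous.sum
      intro k _
      have hmw : matAct (A : Matrix (Fin (n + 2)) (Fin (n + 2)) ℂ) (F' k)
          ∈ MvPolynomial.weightedHomogeneousSubmodule ℂ w (d - 1, 0) :=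
        matAct_isWeightedHomogeneous (hblk A hA) (hF'w k)
      exact Submodule.smul_mem _ _ hmw
    exact congrFun (huniq2 _ _ hQs hRs heq) j
  have hrel2 : ∀ A ∈ G, ∀ j, matAct ((A : GL (Fin (n + 2)) ℂ) : Matrix (Fin (n + 2)) (Fin (n + 2)) ℂ) (F' j)
      = ∑ k : Fin n₂, (((A⁻¹ : GL (Fin (n + 2)) ℂ) : Matrix (Fin (n + 2)) (Fin (n + 2)) ℂ) (ι k) (ι j)) • F' k := by
    intro A hA j
    have hB : (A⁻¹ : GL (Fin (n + 2)) ℂ) ∈ G := inv_mem hA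
    have h1 := hrel (A⁻¹) hB j
    have h2 := congrArg (matAct ((A : GL (Fin (n + 2)) ℂ) : Matrix (Fin (n + 2)) (Fin (n + 2)) ℂ)) h1
    calc matAct ((A : GL (Fin (n + 2)) ℂ) : Matrix (Fin (n + 2)) (Fin (n + 2)) ℂ) (F' j)
        = matAct ((A : GL (Fin (n + 2)) ℂ) : Matrix (Fin (n + 2)) (Fin (n + 2)) ℂ)
            (∑ k : Fin n₂, (((A⁻¹ : GL (Fin (n + 2)) ℂ) : Matrix (Fin (n + 2)) (Fin (n + 2)) ℂ)
              (ι k) (ι j)) • matAct (((A⁻¹ : GL (Fin (n + 2)) ℂ) :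
                Matrix (Fin (n + 2)) (Fin (n + 2)) ℂ)) (F' k)) := h2
      _ = ∑ k : Fin n₂, matAct ((A : GL (Fin (n + 2)) ℂ) : Matrix (Fin (n + 2)) (Fin (n + 2)) ℂ)
            ((((A⁻¹ : GL (Fin (n + 2)) ℂ) : Matrix (Fin (n + 2)) (Fin (n + 2)) ℂ)
              (ι k) (ι j)) • matAct (((A⁻¹ : GL (Fin (n + 2)) ℂ) :
                Matrix (Fin (n + 2)) (Fin (n + 2)) ℂ)) (F' k)) := hmas _ _ _ _
      _ = ∑ k : Fin n₂, (((A⁻¹ : GL (Fin (n + 2)) ℂ) : Matrix (Fin (n + 2)) (Fin (n + 2)) ℂ)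
            (ι k) (ι j)) • F' k := Finset.sum_congr rfl fun k _ => by rw [hmac, hmaiv A hA]
  -- the linear map T
  set T : (Fin (n + 2) → ℂ) →ₗ[ℂ] MvPolynomial (Fin (n + 2)) ℂ :=
    ∑ k : Fin n₂, (LinearMap.proj (ι k)).smulRight (F' k) with hTdef
  have hT : ∀ v : Fin (n + 2) → ℂ, T v = ∑ k : Fin n₂, v (ι k) • F' k := by
    intro v
    rw [hTdef]
    simp [LinearMap.sum_apply, LinearMap.smulRight_apply, LinearMap.proj_apply]
  set W : Submodule ℂ (Fin (n + 2) → ℂ) := V₂ ⊓ LinearMap.ker T with hWdef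
  have hWstab : ∀ A ∈ G, ∀ v ∈ W,
      Matrix.mulVec (A : Matrix (Fin (n + 2)) (Fin (n + 2)) ℂ) v ∈ W := by
    intro A hA v hv
    rw [hWdef, Submodule.mem_inf] at hv ⊢
    obtain ⟨hv₂, hvk⟩ := hv
    refine ⟨hstab₂ A hA v hv₂, ?_⟩
    rw [LinearMap.mem_ker] at hvk ⊢
    rw [hT] at hvk ⊢
    have hmv : ∀ k : Fin n₂, (Matrix.mulVec (A : Matrix (Fin (n + 2)) (Fin (n + 2)) ℂ) v) (ι k)
        = ∑ j : Fin n₂, (A : Matrix (Fin (n + 2)) (Fin (n + 2)) ℂ) (ι k) (ι j) * v (ι j) := by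
      intro k
      show ∑ i, (A : Matrix (Fin (n + 2)) (Fin (n + 2)) ℂ) (ι k) i * v i = _
      rw [hsplit ℂ _ (fun i => (A : Matrix (Fin (n + 2)) (Fin (n + 2)) ℂ) (ι k) i * v i),
        Finset.sum_eq_zero, zero_add]
      intro i' _
      rw [hV₂mem v hv₂ _ (show ((Fin.cast hsum (Fin.castAdd n₂ i') : ℕ)) < n₁ from i'.isLt),
        mul_zero]
    calc ∑ k : Fin n₂, (Matrix.mulVec (A : Matrix (Fin (n + 2)) (Fin (n + 2)) ℂ) v) (ι k) • F' k
        = ∑ k : Fin n₂, ∑ j : Fin n₂,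
            ((A : Matrix (Fin (n + 2)) (Fin (n + 2)) ℂ) (ι k) (ι j) * v (ι j)) • F' k := by
          refine Finset.sum_congr rfl fun k _ => ?_
          rw [hmv k, Finset.sum_smul]
      _ = ∑ j : Fin n₂, v (ι j) • (∑ k : Fin n₂,
            ((A : Matrix (Fin (n + 2)) (Fin (n + 2)) ℂ) (ι k) (ι j)) • F' k) := by
          rw [Finset.sum_comm]
          refine Finset.sum_congr rfl fun j _ => ?_
          rw [Finset.smul_sum]
          refine Finset.sum_congr rfl fun k _ => ?_
          rw [smul_smul, mul_comm]
      _ = ∑ j : Fin n₂, v (ι j) •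
            matAct (((A⁻¹ : GL (Fin (n + 2)) ℂ) : Matrix (Fin (n + 2)) (Fin (n + 2)) ℂ)) (F' j) := by
          refine Finset.sum_congr rfl fun j _ => ?_
          congr 1
          have := hrel2 (A⁻¹) (inv_mem hA) j
          rw [inv_inv] at this
          rw [this]
      _ = matAct (((A⁻¹ : GL (Fin (n + 2)) ℂ) : Matrix (Fin (n + 2)) (Fin (n + 2)) ℂ))
            (∑ j : Fin n₂, v (ι j) • F' j) := by
          rw [hmas _ _ Finset.univ (fun j => v (ι j) • F' j)]
          exact Finset.sum_congr rfl fun j _ => (hmac _ _ _).symm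
      _ = 0 := by
          rw [hvk]
          exact map_zero (MvPolynomial.bind₁ fun i => ∑ j, MvPolynomial.C
            ((((A⁻¹ : GL (Fin (n + 2)) ℂ) : Matrix (Fin (n + 2)) (Fin (n + 2)) ℂ)) i j)
            * MvPolynomial.X j)
  have hWbot : W = ⊥ := by
    rcases hirr₂ W inf_le_left hWstab with h | h
    · exact h
    · exfalso
      apply hne'
      have hFz : ∀ j, F' j = 0 := by
        intro j
        have hmem : Pi.single (ι j) (1 : ℂ) ∈ W := by
          rw [h]
          exact hsingle₂ (ι j) (hιge j)
        rw [hWdef, Submodule.mem_inf, LinearMap.mem_ker, hT] at hmem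
        have hmem2 := hmem.2
        have hterm : ∀ k : Fin n₂, (Pi.single (ι j) (1 : ℂ) : Fin (n + 2) → ℂ) (ι k) • F' k
            = if k = j then F' k else 0 := by
          intro k
          rw [Pi.single_apply]
          by_cases hkj : k = j
          · subst hkj
            rw [if_pos rfl, if_pos rfl, one_smul]
          · rw [if_neg (fun hc => hkj (hιinj hc)), if_neg hkj, zero_smul]
        rw [Finset.sum_congr rfl (fun k _ => hterm k),
          Finset.sum_ite_eq' Finset.univ j, if_pos (Finset.mem_univ _)] at hmem2
        exact hmem2
      rw [hdecomp, Finset.sum_eq_zero (fun j _ => by rw [hFz j, zero_mul])]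
  refine ⟨F', ?_, ?_, ?_, ?_⟩
  · -- homogeneity of degree d - 1
    intro j
    intro m hm
    have h1 := hF'w j hm
    rw [hw, weight_wtAux] at h1
    have h4 := congrArg Prod.fst h1
    have h5 := congrArg Prod.snd h1
    simp only at h4 h5
    show Finsupp.weight 1 m = d - 1
    rw [Finsupp.weight_apply, Finsupp.sum_fintype _ _ (fun _ => by simp)]
    simp only [Pi.one_apply, smul_eq_mul, mul_one]
    rw [← Finset.sum_filter_add_sum_filter_not Finset.univ (fun i : Fin (n + 2) => (i : ℕ) < n₁) m]
    have hfe : Finset.univ.filter (fun i : Fin (n + 2) => ¬ (i : ℕ) < n₁)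
        = Finset.univ.filter (fun i : Fin (n + 2) => n₁ ≤ (i : ℕ)) := by
      apply Finset.filter_congr
      intro i _
      simp [not_lt]
    rw [hfe, h4, h5, add_zero]
  · -- support condition
    intro j m hm i hne0
    by_contra hlt
    exact hne0 (hwsupp _ (hF'w j) m (MvPolynomial.mem_support_iff.mp hm) i (by omega))
  · -- linear independence
    rw [Fintype.linearIndependent_iff]
    intro c hc
    set v : Fin (n + 2) → ℂ :=
      ∑ j : Fin n₂, c j • (Pi.single (ι j) (1 : ℂ) : Fin (n + 2) → ℂ) with hvdef
    have hvV₂ : v ∈ V₂ :=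
      Submodule.sum_mem _ fun j _ => Submodule.smul_mem _ _ (hsingle₂ _ (hιge j))
    have hvι : ∀ k : Fin n₂, v (ι k) = c k := by
      intro k
      rw [hvdef, Finset.sum_apply]
      have hterm : ∀ j : Fin n₂, (c j • (Pi.single (ι j) (1 : ℂ) : Fin (n + 2) → ℂ)) (ι k)
          = if j = k then c j else 0 := by
        intro j
        rw [Pi.smul_apply, Pi.single_apply]
        by_cases hjk : j = k
        · subst hjk
          rw [if_pos rfl, if_pos rfl, smul_eq_mul, mul_one]
        · rw [if_neg (fun hc' => hjk (hιinj hc'.symm)), if_neg hjk, smul_eq_mul, mul_zero]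
      rw [Finset.sum_congr rfl (fun j _ => hterm j),
        Finset.sum_ite_eq' Finset.univ k, if_pos (Finset.mem_univ _)]
    have hvW : v ∈ W := by
      rw [hWdef, Submodule.mem_inf, LinearMap.mem_ker, hT]
      refine ⟨hvV₂, ?_⟩
      rw [Finset.sum_congr rfl (fun k _ => by rw [hvι k])]
      exact hc
    rw [hWbot, Submodule.mem_bot] at hvW
    intro j
    rw [← hvι j, hvW]
    rfl
  · rw [hHbid, hdecomp]
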